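/- For all positive integers k ≥ 2 and q, and any integer ℓ, the number of (k−1)-tuples (h_1, …, h_{k−1}) ∈ {0,…,q−1}^{k−1} such that q divides ℓ·k!·h_1⋯h_{k−1} is at most τ(q')^{k−1} · q^{k−1}/q', where q' = q/gcd(q, k!·ℓ) and τ is the number-of-divisors function. -/

import Mathlib

open Finset

lemma exists_dvd_prod_aux {ι : Type*} [DecidableEq ι] (s : Finset ι) (h : ι → ℕ) :
    ∀ n : ℕ, n ∣ ∏ i ∈ s, h i →
    ∃ d : ι → ℕ, (∀ i ∈ s, d i ∣ h i) ∧ ∏ i ∈ s, d i = n := by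
  induction s using Finset.induction_on with
  | empty =>
      intro n hn
      simp only [Finset.prod_empty] at hn ⊢
      exact ⟨fun _ => 1, by simp, (Nat.dvd_one.mp hn).symm⟩
  | @insert a s ha ih =>
      intro n hn
      rw [Finset.prod_insert ha] at hn
      obtain ⟨d1, d2, hd1, hd2, hn12⟩ := exists_dvd_and_dvd_of_dvd_mul hn
      obtain ⟨d, hdv, hpr⟩ := ih d2 hd2
      refine ⟨Function.update d a d1, ?_, ?_⟩
      · intro i hi
        rcases Finset.mem_insert.mp hi with h' | hi
        · subst h'; simpa using hd1
        · rw [Function.update_of_ne (ne_of_mem_of_not_mem hi ha)]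
          exact hdv i hi
      · rw [Finset.prod_insert ha, Function.update_self,
          Finset.prod_congr rfl
            (fun i hi => Function.update_of_ne (ne_of_mem_of_not_mem hi ha) _ _),
          hpr, hn12]

lemma dvd_iff_div_gcd {q m : ℕ} (n : ℕ) (hq : 0 < q) :
    q ∣ m * n ↔ q / Nat.gcd q m ∣ n := by
  have hg0 : 0 < Nat.gcd q m := Nat.gcd_pos_of_pos_left m hq
  have hq' : q = Nat.gcd q m * (q / Nat.gcd q m) :=
    (Nat.mul_div_cancel' (Nat.gcd_dvd_left q m)).symm
  have hm' : m = Nat.gcd q m * (m / Nat.gcd q m) :=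
    (Nat.mul_div_cancel' (Nat.gcd_dvd_right q m)).symm
  constructor
  · intro hd
    have h1 : Nat.gcd q m * (q / Nat.gcd q m) ∣ Nat.gcd q m * (m / Nat.gcd q m * n) := by
      rw [← mul_assoc, ← hm', ← hq']; exact hd
    have h2 : q / Nat.gcd q m ∣ m / Nat.gcd q m * n :=
      (mul_dvd_mul_iff_left hg0.ne').mp h1
    exact (Nat.coprime_div_gcd_div_gcd hg0).dvd_of_dvd_mul_left h2
  · intro hd
    calc q = Nat.gcd q m * (q / Nat.gcd q m) := hq'
    _ ∣ m * n := mul_dvd_mul (Nat.gcd_dvd_right q m) hd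

lemma card_multiples_range {q d : ℕ} (hd : 0 < d) (hdq : d ∣ q) :
    ((range q).filter (fun x => d ∣ x)).card = q / d := by
  have himg : (range q).filter (fun x => d ∣ x) = (range (q / d)).image (· * d) := by
    ext x
    simp only [mem_filter, mem_range, mem_image]
    constructor
    · rintro ⟨hx, c, rfl⟩
      exact ⟨c, (Nat.lt_div_iff_mul_lt' hdq c).mpr hx, mul_comm c d⟩
    · rintro ⟨c, hc, rfl⟩
      rw [Nat.lt_div_iff_mul_lt' hdq] at hc
      exact ⟨by rw [mul_comm]; exact hc, dvd_mul_left d c⟩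
  rw [himg, Finset.card_image_of_injective _ (fun a b hab => Nat.eq_of_mul_eq_mul_right hd hab),
    Finset.card_range]

/-- The number of `(k−1)`-tuples `(h₁,…,h_{k−1}) ∈ {0,…,q−1}^{k−1}` with
`q ∣ ℓ·k!·h₁⋯h_{k−1}` is at most `τ(q')^{k−1} · q^{k−1}/q'`, where
`q' = q / gcd(q, k!·ℓ)`. -/
theorem divisibility_tuple_count (k : ℕ) (hk : 2 ≤ k) (q : ℕ) (hq : 0 < q)
    (ℓ : ℤ) :
    (((Fintype.piFinset fun _ : Fin (k - 1) => Finset.range q).filter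
        (fun h => (q : ℤ) ∣ ℓ * (Nat.factorial k : ℤ) * ∏ i, (h i : ℤ))).card : ℝ) ≤
      ((Nat.divisors (q / Nat.gcd q ((Nat.factorial k : ℤ) * ℓ).natAbs)).card : ℝ) ^ (k - 1) *
        (q : ℝ) ^ (k - 1) / (q / Nat.gcd q ((Nat.factorial k : ℤ) * ℓ).natAbs : ℕ) := by
  set m : ℕ := ((Nat.factorial k : ℤ) * ℓ).natAbs with hmdef
  set q' : ℕ := q / Nat.gcd q m with hq'def
  have hq'dvd : q' ∣ q := Nat.div_dvd_of_dvd (Nat.gcd_dvd_left q m)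
  have hq'pos : 0 < q' :=
    Nat.div_pos (Nat.le_of_dvd hq (Nat.gcd_dvd_left q m)) (Nat.gcd_pos_of_pos_left m hq)
  -- rewrite the divisibility condition
  have hcond : ∀ h : Fin (k - 1) → ℕ,
      ((q : ℤ) ∣ ℓ * (Nat.factorial k : ℤ) * ∏ i, (h i : ℤ)) ↔ q' ∣ ∏ i, h i := by
    intro h
    have heq : ℓ * (Nat.factorial k : ℤ) * ∏ i, (h i : ℤ) =
        ((Nat.factorial k : ℤ) * ℓ) * ((∏ i, h i : ℕ) : ℤ) := by
      push_cast; ring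
    rw [heq, Int.natCast_dvd, Int.natAbs_mul, Int.natAbs_natCast, ← hmdef,
      dvd_iff_div_gcd _ hq]
  -- the covering family
  set S : Finset (Fin (k - 1) → ℕ) :=
    (Fintype.piFinset fun _ : Fin (k - 1) => Nat.divisors q').filter
      (fun d => ∏ i, d i = q') with hSdef
  set T : (Fin (k - 1) → ℕ) → Finset (Fin (k - 1) → ℕ) :=
    fun d => Fintype.piFinset fun i => (range q).filter (fun x => d i ∣ x) with hTdef
  have hsub : (Fintype.piFinset fun _ : Fin (k - 1) => Finset.range q).filter
        (fun h => (q : ℤ) ∣ ℓ * (Nat.factorial k : ℤ) * ∏ i, (h i : ℤ)) ⊆ S.biUnion T := by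
    intro h hh
    rw [Finset.mem_filter] at hh
    obtain ⟨hh1, hh2⟩ := hh
    rw [hcond h] at hh2
    obtain ⟨d, hdv, hpr⟩ := exists_dvd_prod_aux Finset.univ h q' hh2
    refine Finset.mem_biUnion.mpr ⟨d, ?_, ?_⟩
    · rw [hSdef, Finset.mem_filter]
      refine ⟨Fintype.mem_piFinset.mpr fun i => ?_, hpr⟩
      exact Nat.mem_divisors.mpr ⟨hpr ▸ Finset.dvd_prod_of_mem d (Finset.mem_univ i),
        hq'pos.ne'⟩
    · rw [hTdef]
      refine Fintype.mem_piFinset.mpr fun i => ?_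
      exact Finset.mem_filter.mpr ⟨Fintype.mem_piFinset.mp hh1 i, hdv i (Finset.mem_univ i)⟩
  -- cardinality of each T d, for d ∈ S
  have hTcard : ∀ d ∈ S, ((T d).card : ℝ) = (q : ℝ) ^ (k - 1) / q' := by
    intro d hd
    rw [hSdef, Finset.mem_filter] at hd
    obtain ⟨hd1, hd2⟩ := hd
    have hdvd : ∀ i, d i ∣ q' := fun i =>
      hd2 ▸ Finset.dvd_prod_of_mem d (Finset.mem_univ i)
    have hdpos : ∀ i, 0 < d i := fun i =>
      Nat.pos_of_mem_divisors (Fintype.mem_piFinset.mp hd1 i)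
    have hcard : (T d).card = ∏ i : Fin (k - 1), (q / d i) := by
      rw [hTdef, Fintype.card_piFinset]
      exact Finset.prod_congr rfl fun i _ =>
        card_multiples_range (hdpos i) ((hdvd i).trans hq'dvd)
    rw [hcard, Nat.cast_prod,
      Finset.prod_congr rfl (fun i _ => Nat.cast_div ((hdvd i).trans hq'dvd)
        (Nat.cast_ne_zero.mpr (hdpos i).ne')),
      Finset.prod_div_distrib, Finset.prod_const, Finset.card_univ, Fintype.card_fin]
    congr 1
    rw [← Nat.cast_prod, hd2]
  -- putting it together
  have hScard : (S.card : ℝ) ≤ ((Nat.divisors q').card : ℝ) ^ (k - 1) := by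
    have : S.card ≤ (Fintype.piFinset fun _ : Fin (k - 1) => Nat.divisors q').card :=
      Finset.card_le_card (Finset.filter_subset _ _)
    rw [Fintype.card_piFinset, Finset.prod_const, Finset.card_univ, Fintype.card_fin] at this
    exact_mod_cast this
  calc (((Fintype.piFinset fun _ : Fin (k - 1) => Finset.range q).filter
        (fun h => (q : ℤ) ∣ ℓ * (Nat.factorial k : ℤ) * ∏ i, (h i : ℤ))).card : ℝ)
      ≤ ((S.biUnion T).card : ℝ) := by exact_mod_cast Finset.card_le_card hsub
    _ ≤ ∑ d ∈ S, ((T d).card : ℝ) := by exact_mod_cast Finset.card_biUnion_le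
    _ = ∑ d ∈ S, (q : ℝ) ^ (k - 1) / q' := Finset.sum_congr rfl hTcard
    _ = (S.card : ℝ) * ((q : ℝ) ^ (k - 1) / q') := by rw [Finset.sum_const, nsmul_eq_mul]
    _ ≤ ((Nat.divisors q').card : ℝ) ^ (k - 1) * ((q : ℝ) ^ (k - 1) / q') := by
        apply mul_le_mul_of_nonneg_right hScard
        positivity
    _ = ((Nat.divisors q').card : ℝ) ^ (k - 1) * (q : ℝ) ^ (k - 1) / q' := by ring
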